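/- Given d+1 mutually unbiased bases {|x_b⟩ : x ∈ {0,1}^n} (b ∈ [d+1]) of ℂ^d with d = 2^n, the d^2 matrices consisting of the identity together with S_b^j = Σ_{x∈{0,1}^n} (−1)^{j·x} |x_b⟩⟨x_b| for b ∈ [d+1] and j ∈ {0,1}^n \ {0} form an orthogonal basis (with respect to the Hilbert–Schmidt inner product) of the space of d×d matrices; moreover each S_b^j is traceless, Hermitian, and satisfies (S_b^j)^2 = I. -/

import Mathlib

noncomputable section

open Matrix

/-- The sign `(-1)^{j·x}` for bit strings `j, x ∈ {0,1}ⁿ` (bitwise inner product mod 2). -/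
def mubSign {n : ℕ} (j x : Fin n → ZMod 2) : ℂ :=
  (-1 : ℂ) ^ (∑ i, (j i * x i).val)

/-- The rank-one projector `|x_b⟩⟨x_b|` as a matrix. -/
def outer {n : ℕ} (w : EuclideanSpace ℂ (Fin (2 ^ n))) :
    Matrix (Fin (2 ^ n)) (Fin (2 ^ n)) ℂ :=
  Matrix.vecMulVec (fun i => w i) (fun i => starRingEnd ℂ (w i))

/-- The MUB operator basis element `S_b^j = Σ_x (-1)^{j·x} |x_b⟩⟨x_b|`. -/
def mubS {n : ℕ} (v : Fin (2 ^ n + 1) → (Fin n → ZMod 2) → EuclideanSpace ℂ (Fin (2 ^ n)))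
    (b : Fin (2 ^ n + 1)) (j : Fin n → ZMod 2) :
    Matrix (Fin (2 ^ n)) (Fin (2 ^ n)) ℂ :=
  ∑ x, mubSign j x • outer (v b x)

/-- The family consisting of the identity together with the `S_b^j` for `j ≠ 0`. -/
def mubFamily {n : ℕ}
    (v : Fin (2 ^ n + 1) → (Fin n → ZMod 2) → EuclideanSpace ℂ (Fin (2 ^ n)))
    (o : Option (Fin (2 ^ n + 1) × {j : Fin n → ZMod 2 // j ≠ 0})) :
    Matrix (Fin (2 ^ n)) (Fin (2 ^ n)) ℂ :=
  o.elim 1 fun p => mubS v p.1 p.2.1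

namespace MubProofAux

variable {n : ℕ}

lemma zmod2_cases : ∀ a : ZMod 2, a = 0 ∨ a = 1 := by decide
lemma zmod2_add_self : ∀ a : ZMod 2, a + a = 0 := by decide
lemma zmod2_add_eq_zero : ∀ a b : ZMod 2, a + b = 0 → a = b := by decide

lemma chi_add (a b : ZMod 2) : (-1:ℂ)^((a+b).val) = (-1:ℂ)^a.val * (-1:ℂ)^b.val := by
  rcases zmod2_cases a with h | h <;> rcases zmod2_cases b with h' | h' <;>
    subst h <;> subst h' <;>
    norm_num [show ZMod.val (2:ZMod 2) = 0 by decide, show ZMod.val (0:ZMod 2) = 0 by decide,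
      show ZMod.val (1:ZMod 2) = 1 by decide]

lemma mubSign_eq (j x : Fin n → ZMod 2) :
    mubSign j x = (-1:ℂ)^((∑ i, j i * x i).val) := by
  rw [mubSign, neg_one_pow_eq_pow_mod_two]
  congr 1
  have h : ((∑ i, (j i * x i).val : ℕ) : ZMod 2) = ∑ i, j i * x i := by push_cast; simp
  rw [← ZMod.val_natCast, h]

lemma mubSign_add_left (j j' x : Fin n → ZMod 2) :
    mubSign (j + j') x = mubSign j x * mubSign j' x := by
  rw [mubSign_eq, mubSign_eq, mubSign_eq, ← chi_add, ← Finset.sum_add_distrib]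
  congr 2
  exact Finset.sum_congr rfl fun i _ => by simp [add_mul]

lemma mubSign_add_right (j x y : Fin n → ZMod 2) :
    mubSign j (x + y) = mubSign j x * mubSign j y := by
  rw [mubSign_eq, mubSign_eq, mubSign_eq, ← chi_add, ← Finset.sum_add_distrib]
  congr 2
  exact Finset.sum_congr rfl fun i _ => by simp [mul_add]

lemma mubSign_zero (x : Fin n → ZMod 2) : mubSign 0 x = 1 := by
  simp [mubSign]

lemma mubSign_self (j x : Fin n → ZMod 2) : mubSign j x * mubSign j x = 1 := by
  rw [← mubSign_add_left]
  have h : j + j = 0 := by funext i; exact zmod2_add_self (j i)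
  rw [h, mubSign_zero]

lemma mubSign_conj (j x : Fin n → ZMod 2) : (starRingEnd ℂ) (mubSign j x) = mubSign j x := by
  simp [mubSign]

lemma sum_mubSign {j : Fin n → ZMod 2} (hj : j ≠ 0) : ∑ x, mubSign j x = 0 := by
  obtain ⟨i0, hi0⟩ : ∃ i, j i ≠ 0 := by
    by_contra h; push_neg at h; exact hj (funext h)
  have hj1 : j i0 = 1 := (zmod2_cases (j i0)).resolve_left hi0
  set e : Fin n → ZMod 2 := Pi.single i0 1 with he
  have hsign : ∀ x, mubSign j (x + e) = - mubSign j x := by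
    intro x
    rw [mubSign_add_right]
    have : mubSign j e = -1 := by
      rw [mubSign_eq]
      have : ∑ i, j i * e i = 1 := by
        rw [Finset.sum_eq_single i0]
        · simp [he, hj1]
        · intro i _ hne; simp [he, Pi.single_apply, hne]
        · simp
      rw [this]; norm_num [show ZMod.val (1:ZMod 2) = 1 by decide]
    rw [this]; ring
  have hbij : Function.Bijective (fun x : Fin n → ZMod 2 => x + e) :=
    (Equiv.addRight e).bijective
  have h2 : ∑ x, mubSign j x = ∑ x, mubSign j (x + e) :=
    (Fintype.sum_bijective _ hbij _ _ (fun x => rfl)).symm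
  simp_rw [hsign, Finset.sum_neg_distrib] at h2
  have h3 : (2:ℂ) * (∑ x, mubSign j x) = 0 := by linear_combination h2
  simpa using h3

lemma outer_herm (w : EuclideanSpace ℂ (Fin (2 ^ n))) : (outer w)ᴴ = outer w := by
  ext i k
  simp [outer, conjTranspose_apply, vecMulVec_apply, mul_comm]

lemma trace_outer (w : EuclideanSpace ℂ (Fin (2 ^ n))) :
    (outer w).trace = (inner ℂ w w : ℂ) := by
  simp only [PiLp.inner_apply, RCLike.inner_apply]
  simp [outer, trace, diag, vecMulVec_apply, PiLp.inner_apply, mul_comm]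

lemma outer_mul (w w' : EuclideanSpace ℂ (Fin (2 ^ n))) :
    outer w * outer w' = (inner ℂ w w' : ℂ) •
      Matrix.vecMulVec (fun i => w i) (fun k => starRingEnd ℂ (w' k)) := by
  ext i k
  simp only [mul_apply, outer, vecMulVec_apply, Matrix.smul_apply, smul_eq_mul, PiLp.inner_apply,
    RCLike.inner_apply]
  rw [Finset.sum_mul]
  apply Finset.sum_congr rfl
  intro m _
  ring

lemma trace_outer_mul (w w' : EuclideanSpace ℂ (Fin (2 ^ n))) :
    (outer w * outer w').trace = (inner ℂ w w' : ℂ) * (inner ℂ w' w : ℂ) := by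
  rw [outer_mul, trace_smul]
  simp only [smul_eq_mul]
  congr 1

lemma outer_mul_ite {v : (Fin n → ZMod 2) → EuclideanSpace ℂ (Fin (2 ^ n))}
    (hv : Orthonormal ℂ v) (x x' : Fin n → ZMod 2) :
    outer (v x) * outer (v x') = if x = x' then outer (v x) else 0 := by
  rw [outer_mul, orthonormal_iff_ite.mp hv x x']
  by_cases h : x = x'
  · subst h; simp [outer]
  · simp [h]

lemma sum_outer {v : (Fin n → ZMod 2) → EuclideanSpace ℂ (Fin (2 ^ n))}
    (hv : Orthonormal ℂ v) : ∑ x, outer (v x) = 1 := by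
  have hcard : Fintype.card (Fin (2 ^ n)) = Fintype.card (Fin n → ZMod 2) := by
    simp [Fintype.card_fun]
  let e : Fin (2 ^ n) ≃ (Fin n → ZMod 2) := Fintype.equivOfCardEq hcard
  set U : Matrix (Fin (2 ^ n)) (Fin n → ZMod 2) ℂ := Matrix.of fun i x => v x i with hU
  have hUU : Uᴴ * U = 1 := by
    ext x x'
    have := orthonormal_iff_ite.mp hv x x'
    simp only [mul_apply, conjTranspose_apply, hU, Matrix.of_apply, one_apply]
    rw [← this]
    simp [PiLp.inner_apply, RCLike.star_def]
    exact Finset.sum_congr rfl fun _ _ => mul_comm _ _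
  have h1 : U * Uᴴ = 1 := (Matrix.mul_eq_one_comm_of_equiv e).mpr hUU
  calc ∑ x, outer (v x) = U * Uᴴ := by
        ext i k
        simp [outer, Matrix.sum_apply, vecMulVec_apply, mul_apply, hU]
    _ = 1 := h1

variable {v : Fin (2 ^ n + 1) → (Fin n → ZMod 2) → EuclideanSpace ℂ (Fin (2 ^ n))}

lemma mubS_herm (b : Fin (2 ^ n + 1)) (j : Fin n → ZMod 2) : (mubS v b j).IsHermitian := by
  unfold Matrix.IsHermitian
  rw [mubS, conjTranspose_sum]
  apply Finset.sum_congr rfl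
  intro x _
  rw [conjTranspose_smul, outer_herm, RCLike.star_def, mubSign_conj]

lemma trace_mubS (horth : ∀ b, Orthonormal ℂ (v b)) (b : Fin (2 ^ n + 1))
    (j : Fin n → ZMod 2) : (mubS v b j).trace = ∑ x, mubSign j x := by
  rw [mubS, trace_sum]
  apply Finset.sum_congr rfl
  intro x _
  rw [trace_smul, trace_outer]
  have : (inner ℂ (v b x) (v b x) : ℂ) = 1 := by
    rw [inner_self_eq_norm_sq_to_K, (horth b).1 x]
    norm_num
  rw [this, smul_eq_mul, mul_one]

lemma mubS_mul_same (horth : ∀ b, Orthonormal ℂ (v b)) (b : Fin (2 ^ n + 1))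
    (j j' : Fin n → ZMod 2) :
    mubS v b j * mubS v b j' = ∑ x, mubSign (j + j') x • outer (v b x) := by
  rw [mubS, mubS, Finset.sum_mul]
  have : ∀ x, (mubSign j x • outer (v b x)) * ∑ x', mubSign j' x' • outer (v b x')
      = mubSign (j + j') x • outer (v b x) := by
    intro x
    rw [Finset.mul_sum]
    have hterm : ∀ x', (mubSign j x • outer (v b x)) * (mubSign j' x' • outer (v b x'))
        = (mubSign j x * mubSign j' x') • if x = x' then outer (v b x) else 0 := by
      intro x'
      rw [Matrix.smul_mul, Matrix.mul_smul, smul_smul, outer_mul_ite (horth b)]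
    simp_rw [hterm, smul_ite, smul_zero, Finset.sum_ite_eq, Finset.mem_univ, if_true,
      mubSign_add_left]
  exact Finset.sum_congr rfl fun x _ => this x

lemma mubS_sq (horth : ∀ b, Orthonormal ℂ (v b)) (b : Fin (2 ^ n + 1))
    (j : Fin n → ZMod 2) : mubS v b j * mubS v b j = 1 := by
  rw [mubS_mul_same horth]
  have h : j + j = 0 := funext fun i => zmod2_add_self (j i)
  simp_rw [h, mubSign_zero, one_smul]
  exact sum_outer (horth b)

lemma trace_mubS_mul_same (horth : ∀ b, Orthonormal ℂ (v b)) (b : Fin (2 ^ n + 1))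
    {j j' : Fin n → ZMod 2} (hjj : j ≠ j') :
    (mubS v b j * mubS v b j').trace = 0 := by
  rw [mubS_mul_same horth, trace_sum]
  have hne : j + j' ≠ 0 := fun h => hjj (funext fun i => zmod2_add_eq_zero _ _ (congrFun h i))
  calc ∑ x, (mubSign (j + j') x • outer (v b x)).trace
      = ∑ x, mubSign (j + j') x := by
        apply Finset.sum_congr rfl
        intro x _
        rw [trace_smul, trace_outer]
        have : (inner ℂ (v b x) (v b x) : ℂ) = 1 := by
          rw [inner_self_eq_norm_sq_to_K, (horth b).1 x]
          norm_num
        rw [this, smul_eq_mul, mul_one]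
    _ = 0 := sum_mubSign hne

lemma trace_mubS_mul_diff
    (hmub : ∀ b b', b ≠ b' → ∀ x x',
      ‖(inner ℂ (v b x) (v b' x') : ℂ)‖ ^ 2 = 1 / (2 ^ n : ℝ))
    {b b' : Fin (2 ^ n + 1)} (hbb : b ≠ b') {j j' : Fin n → ZMod 2}
    (hj : j ≠ 0) (hj' : j' ≠ 0) :
    (mubS v b j * mubS v b' j').trace = 0 := by
  rw [mubS, mubS, Finset.sum_mul]
  simp_rw [Finset.mul_sum, Matrix.smul_mul, Matrix.mul_smul, smul_smul, trace_sum, trace_smul]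
  have hterm : ∀ x x', (outer (v b x) * outer (v b' x')).trace = ((1 / (2 ^ n : ℝ) : ℝ) : ℂ) := by
    intro x x'
    rw [trace_outer_mul, ← inner_conj_symm (v b x) (v b' x'),
      ← Complex.normSq_eq_conj_mul_self, Complex.normSq_eq_norm_sq,
      norm_inner_symm, hmub b b' hbb x x']
  calc ∑ x, ∑ x', (mubSign j x * mubSign j' x') • (outer (v b x) * outer (v b' x')).trace
      = ∑ x, ∑ x', (mubSign j x * mubSign j' x') * ((1 / (2 ^ n : ℝ) : ℝ) : ℂ) := by
        apply Finset.sum_congr rfl; intro x _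
        apply Finset.sum_congr rfl; intro x' _
        rw [hterm, smul_eq_mul]
    _ = (∑ x, mubSign j x) * (∑ x', mubSign j' x') * ((1 / (2 ^ n : ℝ) : ℝ) : ℂ) := by
        rw [Finset.sum_mul, Finset.sum_mul]
        apply Finset.sum_congr rfl; intro x _
        rw [Finset.mul_sum, Finset.sum_mul]
    _ = 0 := by rw [sum_mubSign hj, zero_mul, zero_mul]

lemma trace_pair (horth : ∀ b, Orthonormal ℂ (v b))
    (hmub : ∀ b b', b ≠ b' → ∀ x x',
      ‖(inner ℂ (v b x) (v b' x') : ℂ)‖ ^ 2 = 1 / (2 ^ n : ℝ))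
    (o' o : Option (Fin (2 ^ n + 1) × {j : Fin n → ZMod 2 // j ≠ 0})) :
    (mubFamily v o' * mubFamily v o).trace = if o = o' then ((2 ^ n : ℕ) : ℂ) else 0 := by
  match o', o with
  | none, none =>
      simp [mubFamily, Matrix.trace_one]
  | none, some p =>
      rw [if_neg (by simp), show mubFamily v none = 1 from rfl,
        show mubFamily v (some p) = mubS v p.1 p.2.1 from rfl,
        one_mul, trace_mubS horth, sum_mubSign p.2.2]
  | some p, none =>
      rw [if_neg (by simp), show mubFamily v none = 1 from rfl,
        show mubFamily v (some p) = mubS v p.1 p.2.1 from rfl,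
        mul_one, trace_mubS horth, sum_mubSign p.2.2]
  | some p', some p =>
      show (mubS v p'.1 p'.2.1 * mubS v p.1 p.2.1).trace = _
      by_cases hpp : p = p'
      · subst hpp
        rw [if_pos rfl, mubS_sq horth, Matrix.trace_one]
        simp
      · rw [if_neg (by simpa using hpp)]
        by_cases hb : p'.1 = p.1
        · have hj : p'.2.1 ≠ p.2.1 := by
            intro h
            exact hpp (Prod.ext hb.symm (Subtype.ext h.symm))
          rw [← hb]
          exact trace_mubS_mul_same horth p'.1 hj
        · exact trace_mubS_mul_diff hmub hb p'.2.2 p.2.2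

lemma card_index :
    Fintype.card (Option (Fin (2 ^ n + 1) × {j : Fin n → ZMod 2 // j ≠ 0}))
      = 2 ^ n * 2 ^ n := by
  have h1 : Fintype.card {j : Fin n → ZMod 2 // j ≠ 0} = 2 ^ n - 1 := by
    rw [Fintype.card_subtype_compl, Fintype.card_subtype_eq]
    simp [Fintype.card_fun]
  rw [Fintype.card_option, Fintype.card_prod, h1, Fintype.card_fin]
  obtain ⟨e, he⟩ : ∃ e, 2 ^ n = e + 1 := ⟨2 ^ n - 1, by have := Nat.one_le_two_pow (n := n); omega⟩
  rw [he]
  simp [Nat.add_sub_cancel]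
  ring

end MubProofAux

open MubProofAux in
/-- Given `d + 1` mutually unbiased bases of `ℂ^d`, `d = 2ⁿ`, the identity together with
the matrices `S_b^j` (`j ≠ 0`) forms an orthogonal basis (w.r.t. the Hilbert–Schmidt inner
product) of the space of `d × d` matrices; each `S_b^j` is Hermitian, traceless, and
squares to the identity. -/
theorem mub_operator_basis {n : ℕ}
    (v : Fin (2 ^ n + 1) → (Fin n → ZMod 2) → EuclideanSpace ℂ (Fin (2 ^ n)))
    (horth : ∀ b, Orthonormal ℂ (v b))
    (hmub : ∀ b b', b ≠ b' → ∀ x x',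
      ‖(inner ℂ (v b x) (v b' x') : ℂ)‖ ^ 2 = 1 / (2 ^ n : ℝ)) :
    (∀ b j, j ≠ 0 →
      (mubS v b j).IsHermitian ∧ (mubS v b j).trace = 0 ∧
        mubS v b j * mubS v b j = 1) ∧
    (∀ b b' j j', j ≠ 0 → j' ≠ 0 → (b, j) ≠ (b', j') →
      (mubS v b j * mubS v b' j').trace = 0) ∧
    LinearIndependent ℂ (mubFamily v) ∧
    Submodule.span ℂ (Set.range (mubFamily v)) = ⊤ := by
  have horthog : ∀ b b' j j', j ≠ 0 → j' ≠ 0 → (b, j) ≠ (b', j') →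
      (mubS v b j * mubS v b' j').trace = 0 := by
    intro b b' j j' hj hj' hne
    by_cases hb : b = b'
    · subst hb
      have hjj : j ≠ j' := fun h => hne (by rw [h])
      exact trace_mubS_mul_same horth b hjj
    · exact trace_mubS_mul_diff hmub hb hj hj'
  have hli : LinearIndependent ℂ (mubFamily v) := by
    rw [Fintype.linearIndependent_iff]
    intro g hg o'
    have h0 : (mubFamily v o' * (∑ o, g o • mubFamily v o)).trace = 0 := by
      rw [hg, mul_zero, Matrix.trace_zero]
    rw [Finset.mul_sum] at h0
    simp_rw [Matrix.mul_smul, trace_sum, trace_smul, trace_pair horth hmub, smul_eq_mul,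
      mul_ite, mul_zero] at h0
    rw [Finset.sum_ite_eq' Finset.univ o'] at h0
    simp only [Finset.mem_univ, if_true] at h0
    have h2 : ((2 ^ n : ℕ) : ℂ) ≠ 0 := Nat.cast_ne_zero.mpr (by positivity)
    exact (mul_eq_zero.mp h0).resolve_right h2
  refine ⟨fun b j hj => ⟨mubS_herm b j, ?_, mubS_sq horth b j⟩, horthog, hli, ?_⟩
  · rw [trace_mubS horth, sum_mubSign hj]
  · apply hli.span_eq_top_of_card_eq_finrank
    rw [card_index, Module.finrank_matrix]
    simp
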